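/- arXiv:1403.2091 — 2 statements merged into one kernel-verified Lean document; each statement's English description precedes it below -/
import Mathlib

section
/- Let G be a finite group, B a free ℤ_p-module of finite rank with G-action, m ≥ 0, and A a ℤ_pG-submodule of f·B, where f is the exponent of H^{m+1}(G,A). Then the connecting maps in the long exact cohomology sequence of 0 → A → B → B/A → 0 yield an exact sequence H^m(G,B) → H^m(G,B/A) → H^{m+1}(G,A) → 0; that is, the map H^{m+1}(G,A) → H^{m+1}(G,B) induced by the inclusion A ↪ B is zero. -/
namespace GroupCoh

variable (G : Type) [Group G] (M : Type) [AddCommGroup M] [DistribMulAction G M]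

/-- Coboundary map on inhomogeneous cochains. -/
def d (m : ℕ) : ((Fin m → G) → M) →+ ((Fin (m + 1) → G) → M) where
  toFun c := fun g => g 0 • c (fun i => g i.succ) +
    ∑ j : Fin (m + 1), ((-1 : ℤ) ^ ((j : ℕ) + 1)) • c (Fin.contractNth j (· * ·) g)
  map_zero' := by funext g; simp
  map_add' c₁ c₂ := by
    funext g
    simp only [Pi.add_apply, smul_add, Finset.sum_add_distrib]
    abel

/-- Cocycles. -/
def Zc (m : ℕ) : AddSubgroup ((Fin m → G) → M) := (d G M m).ker

/-- Coboundaries. -/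
def Bc : (m : ℕ) → AddSubgroup ((Fin m → G) → M)
  | 0 => ⊥
  | (m + 1) => (d G M m).range

/-- Cohomology. -/
def H (m : ℕ) : Type := Zc G M m ⧸ ((Bc G M m).addSubgroupOf (Zc G M m))

noncomputable instance (m : ℕ) : AddCommGroup (H G M m) :=
  QuotientAddGroup.Quotient.addCommGroup _

/-- Class of a cocycle. -/
def mkH (m : ℕ) (c : (Fin m → G) → M) (hc : c ∈ Zc G M m) : H G M m :=
  QuotientAddGroup.mk ⟨c, hc⟩

end GroupCoh

open GroupCoh

namespace GroupCohAux

variable {G : Type} [Group G]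

lemma d_apply {M : Type} [AddCommGroup M] [DistribMulAction G M] (n : ℕ)
    (c : (Fin n → G) → M) (g : Fin (n + 1) → G) :
    d G M n c g = g 0 • c (fun i => g i.succ) +
      ∑ j : Fin (n + 1), ((-1 : ℤ) ^ ((j : ℕ) + 1)) • c (Fin.contractNth j (· * ·) g) := rfl

lemma comp_d {M N : Type} [AddCommGroup M] [DistribMulAction G M]
    [AddCommGroup N] [DistribMulAction G N] (φ : M →+ N)
    (hφ : ∀ (g : G) (x : M), φ (g • x) = g • φ x) (n : ℕ) (c : (Fin n → G) → M)
    (x : Fin (n + 1) → G) : φ (d G M n c x) = d G N n (fun y => φ (c y)) x := by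
  simp only [d_apply, map_add, map_sum, map_zsmul, hφ]

lemma d_d {M : Type} [AddCommGroup M] [DistribMulAction G M] (n : ℕ)
    (c : (Fin n → G) → M) : d G M (n + 1) (d G M n c) = 0 := by
  have hde : ∀ (k : ℕ) (u : (Fin k → G) → M), d G M k u = (inhomogeneousCochains.d
      (Rep.of (Representation.ofDistribMulAction ℤ G M)) k).hom u := fun k u => by funext g; rfl
  rw [hde, hde]
  set AA := Rep.of (Representation.ofDistribMulAction ℤ G M) with hA
  have h : (inhomogeneousCochains.d AA (n + 1)).hom.comp (inhomogeneousCochains.d AA n).hom = 0 := by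
    have h := congrArg ModuleCat.Hom.hom (groupCohomology.inhomogeneousCochains.d_comp_d (A := AA) (n := n))
    rw [ModuleCat.hom_comp] at h
    exact h
  simpa using LinearMap.ext_iff.1 h c

lemma mem_Zc {M : Type} [AddCommGroup M] [DistribMulAction G M] {n : ℕ}
    {c : (Fin n → G) → M} : c ∈ Zc G M n ↔ d G M n c = 0 := Iff.rfl

lemma mem_Bc_succ {M : Type} [AddCommGroup M] [DistribMulAction G M] {n : ℕ}
    {c : (Fin (n + 1) → G) → M} : c ∈ Bc G M (n + 1) ↔ ∃ e, d G M n e = c := Iff.rfl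

lemma map_mem_Bc {M N : Type} [AddCommGroup M] [DistribMulAction G M]
    [AddCommGroup N] [DistribMulAction G N] (φ : M →+ N)
    (hφ : ∀ (g : G) (x : M), φ (g • x) = g • φ x) (n : ℕ) {c : (Fin n → G) → M}
    (hc : c ∈ Bc G M n) : (fun x => φ (c x)) ∈ Bc G N n := by
  cases n with
  | zero =>
    have hc0 : c = 0 := by simpa [Bc] using hc
    subst hc0
    show (fun x : Fin 0 → G => φ 0) ∈ Bc G N 0
    simp only [map_zero]
    exact (AddSubgroup.mem_bot (x := (0 : (Fin 0 → G) → N))).mpr rfl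
  | succ n =>
    obtain ⟨e, he⟩ := hc
    exact ⟨fun y => φ (e y), by funext x; rw [← he]; exact (comp_d φ hφ n e x).symm⟩

lemma mkH_eq_mkH_iff {M : Type} [AddCommGroup M] [DistribMulAction G M] {n : ℕ}
    {c c' : (Fin n → G) → M} (hc : c ∈ Zc G M n) (hc' : c' ∈ Zc G M n) :
    mkH G M n c hc = mkH G M n c' hc' ↔ c - c' ∈ Bc G M n := by
  unfold mkH
  refine QuotientAddGroup.eq_iff_sub_mem.trans ?_
  exact AddSubgroup.mem_addSubgroupOf

lemma mkH_eq_zero_iff {M : Type} [AddCommGroup M] [DistribMulAction G M] {n : ℕ}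
    {c : (Fin n → G) → M} (hc : c ∈ Zc G M n) :
    mkH G M n c hc = 0 ↔ c ∈ Bc G M n := by
  unfold mkH
  refine (QuotientAddGroup.eq_zero_iff _).trans ?_
  exact AddSubgroup.mem_addSubgroupOf

lemma mkH_congr {M : Type} [AddCommGroup M] [DistribMulAction G M] {n : ℕ}
    {c c' : (Fin n → G) → M} (hc : c ∈ Zc G M n) (hc' : c' ∈ Zc G M n) (h : c = c') :
    mkH G M n c hc = mkH G M n c' hc' := by subst h; rfl

lemma mkH_add {M : Type} [AddCommGroup M] [DistribMulAction G M] {n : ℕ}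
    {c c' : (Fin n → G) → M} (hc : c ∈ Zc G M n) (hc' : c' ∈ Zc G M n) :
    mkH G M n (c + c') (add_mem hc hc') = mkH G M n c hc + mkH G M n c' hc' := rfl

lemma mkH_nsmul {M : Type} [AddCommGroup M] [DistribMulAction G M] {n : ℕ}
    {c : (Fin n → G) → M} (hc : c ∈ Zc G M n) (k : ℕ) :
    mkH G M n (k • c) (nsmul_mem hc k) = k • mkH G M n c hc := by
  exact map_nsmul (QuotientAddGroup.mk' ((Bc G M n).addSubgroupOf (Zc G M n))) k ⟨c, hc⟩

lemma mkH_zero {M : Type} [AddCommGroup M] [DistribMulAction G M] (n : ℕ) :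
    mkH G M n 0 (zero_mem _) = 0 := rfl

end GroupCohAux

/-- Let `G` be a finite group, `B` a `G`-module free of finite rank over `ℤ_p`, `m ≥ 0`, and
`A` a `ℤ_p G`-submodule of `f·B` (given by an injective equivariant map `ι : A → B` whose image
is contained in `f·B`), where `f` is the exponent of `H^{m+1}(G, A)`. Let `0 → A → B → B/A → 0`
be the corresponding short exact sequence (with `Q = B/A` and `π : B → Q`). Then:
(i) the map `H^{m+1}(G, A) → H^{m+1}(G, B)` induced by the inclusion `A ↪ B` is zero, and
(ii) the long exact cohomology sequence yields an exact sequence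
`H^m(G,B) → H^m(G,B/A) → H^{m+1}(G,A) → 0`, where the first map is induced by `π` and the
second is the connecting homomorphism. -/
theorem exact_sequence_of_submodule_of_smul (p : ℕ) [Fact p.Prime]
    (G : Type) [Group G] [Fintype G] (m : ℕ)
    (A : Type) [AddCommGroup A] [Module (PadicInt p) A] [DistribMulAction G A]
    [SMulCommClass G (PadicInt p) A]
    (B : Type) [AddCommGroup B] [Module (PadicInt p) B] [DistribMulAction G B]
    [SMulCommClass G (PadicInt p) B]
    [Module.Free (PadicInt p) B] [Module.Finite (PadicInt p) B]
    (Q : Type) [AddCommGroup Q] [Module (PadicInt p) Q] [DistribMulAction G Q]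
    [SMulCommClass G (PadicInt p) Q]
    (ι : A →ₗ[PadicInt p] B) (π : B →ₗ[PadicInt p] Q)
    (hι : ∀ (g : G) (a : A), ι (g • a) = g • ι a)
    (hπ : ∀ (g : G) (b : B), π (g • b) = g • π b)
    (hinj : Function.Injective ι) (hsurj : Function.Surjective π)
    (hexact : Function.Exact ι π)
    (f : ℕ) (hf : f = AddMonoid.exponent (H G A (m + 1)))
    (hAfB : ∀ a : A, ∃ b : B, ι a = f • b) :
    (∀ a : (Fin (m + 1) → G) → A, a ∈ Zc G A (m + 1) →
        (fun x => ι (a x)) ∈ Bc G B (m + 1)) ∧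
    (∃ (F : H G B m →+ H G Q m) (δ : H G Q m →+ H G A (m + 1)),
      (∀ (c : (Fin m → G) → B) (hc : c ∈ Zc G B m) (hc' : (fun x => π (c x)) ∈ Zc G Q m),
          F (mkH G B m c hc) = mkH G Q m (fun x => π (c x)) hc') ∧
      (∀ (c : (Fin m → G) → B) (a : (Fin (m + 1) → G) → A)
          (ha : a ∈ Zc G A (m + 1)) (hq : (fun x => π (c x)) ∈ Zc G Q m),
          (∀ x, ι (a x) = d G B m c x) →
          δ (mkH G Q m (fun x => π (c x)) hq) = mkH G A (m + 1) a ha) ∧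
      Function.Exact F δ ∧ Function.Surjective δ) := by
  classical
  have ιc : ∀ (n : ℕ) (c : (Fin n → G) → A) (x : Fin (n + 1) → G),
      ι (d G A n c x) = d G B n (fun y => ι (c y)) x :=
    fun n c x => GroupCohAux.comp_d ι.toAddMonoidHom hι n c x
  have πc : ∀ (n : ℕ) (c : (Fin n → G) → B) (x : Fin (n + 1) → G),
      π (d G B n c x) = d G Q n (fun y => π (c y)) x :=
    fun n c x => GroupCohAux.comp_d π.toAddMonoidHom hπ n c x
  have hker : ∀ b : B, π b = 0 → ∃ a, ι a = b := fun b hb => (hexact b).mp hb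
  have hπι : ∀ a : A, π (ι a) = 0 := fun a => (hexact (ι a)).mpr ⟨a, rfl⟩
  -- Part (i)
  have key1 : ∀ a : (Fin (m + 1) → G) → A, a ∈ Zc G A (m + 1) →
      (fun x => ι (a x)) ∈ Bc G B (m + 1) := by
    intro a ha
    rcases Nat.eq_zero_or_pos f with hf0 | hfpos
    · have haz : ∀ x, a x = 0 := by
        intro x
        obtain ⟨b, hb⟩ := hAfB (a x)
        apply hinj
        rw [hb, hf0, zero_nsmul, map_zero]
      refine GroupCohAux.mem_Bc_succ.mpr ⟨0, ?_⟩
      funext x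
      rw [map_zero]
      simp [haz]
    · have hcancel : ∀ x y : B, f • x = f • y → x = y := by
        intro x y h
        have h' : ((f : PadicInt p)) • x = ((f : PadicInt p)) • y := by
          rw [Nat.cast_smul_eq_nsmul, Nat.cast_smul_eq_nsmul]; exact h
        exact smul_right_injective B (by exact_mod_cast hfpos.ne') h'
      have hfa : f • a ∈ Zc G A (m + 1) := nsmul_mem ha f
      have h2 : f • a ∈ Bc G A (m + 1) := by
        rw [← GroupCohAux.mkH_eq_zero_iff hfa, GroupCohAux.mkH_nsmul ha f, hf]
        exact AddMonoid.exponent_nsmul_eq_zero _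
      obtain ⟨cA, hcA⟩ := GroupCohAux.mem_Bc_succ.mp h2
      choose b hb using fun x => hAfB (cA x)
      have hfb : (fun y => ι (cA y)) = f • b := funext hb
      refine GroupCohAux.mem_Bc_succ.mpr ⟨b, ?_⟩
      funext x
      refine (hcancel _ _ ?_).symm
      calc f • ι (a x) = ι (f • a x) := (map_nsmul ι.toAddMonoidHom f (a x)).symm
        _ = ι (d G A m cA x) := congrArg ι (congrFun hcA x).symm
        _ = d G B m (fun y => ι (cA y)) x := ιc m cA x
        _ = d G B m (f • b) x := by rw [hfb]
        _ = f • d G B m b x := congrFun (map_nsmul (d G B m) f b) x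
  refine ⟨key1, ?_⟩
  -- cocycles map to cocycles
  have hZB : ∀ (c : (Fin m → G) → B), c ∈ Zc G B m → (fun x => π (c x)) ∈ Zc G Q m := by
    intro c hc
    rw [GroupCohAux.mem_Zc]
    funext x
    rw [← πc m c x, GroupCohAux.mem_Zc.mp hc]
    simp
  -- The map F
  let F₀ : Zc G B m →+ H G Q m := AddMonoidHom.mk'
    (fun c => mkH G Q m (fun x => π (c.1 x)) (hZB c.1 c.2))
    (by
      intro c c'
      rw [← GroupCohAux.mkH_add]
      exact GroupCohAux.mkH_congr _ _ (by funext x; exact map_add π _ _))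
  have hF₀ : ∀ c ∈ (Bc G B m).addSubgroupOf (Zc G B m), F₀ c = 0 := by
    intro c hc
    have hc' : c.1 ∈ Bc G B m := AddSubgroup.mem_addSubgroupOf.mp hc
    exact (GroupCohAux.mkH_eq_zero_iff _).mpr (GroupCohAux.map_mem_Bc π.toAddMonoidHom hπ m hc')
  let F : H G B m →+ H G Q m := QuotientAddGroup.lift _ F₀ hF₀
  have hFmk : ∀ (c : (Fin m → G) → B) (hc : c ∈ Zc G B m) (hc' : (fun x => π (c x)) ∈ Zc G Q m),
      F (mkH G B m c hc) = mkH G Q m (fun x => π (c x)) hc' := by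
    intro c hc hc'
    exact GroupCohAux.mkH_congr _ _ rfl
  -- cocycle property for the connecting construction
  have hδcocycle : ∀ (c : (Fin m → G) → B) (hq : (fun x => π (c x)) ∈ Zc G Q m)
      (a : (Fin (m + 1) → G) → A), (∀ x, ι (a x) = d G B m c x) → a ∈ Zc G A (m + 1) := by
    intro c hq a hac
    rw [GroupCohAux.mem_Zc]
    funext x
    apply hinj
    show ι (d G A (m + 1) a x) = ι ((0 : (Fin (m + 2) → G) → A) x)
    rw [ιc (m + 1) a x]
    have h1 : (fun y => ι (a y)) = d G B m c := funext hac
    rw [h1, GroupCohAux.d_d]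
    simp
  -- uniqueness: the class of a only depends on q
  have hδuniq : ∀ (c c' : (Fin m → G) → B) (hcc' : ∀ x, π (c x) = π (c' x))
      (a a' : (Fin (m + 1) → G) → A) (ha : a ∈ Zc G A (m + 1)) (ha' : a' ∈ Zc G A (m + 1)),
      (∀ x, ι (a x) = d G B m c x) → (∀ x, ι (a' x) = d G B m c' x) →
      mkH G A (m + 1) a ha = mkH G A (m + 1) a' ha' := by
    intro c c' hcc' a a' ha ha' hac hac'
    rw [GroupCohAux.mkH_eq_mkH_iff]
    choose e he using fun x => hker (c x - c' x) (by rw [map_sub, hcc' x, sub_self])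
    have hce : (fun y => ι (e y)) = c - c' := funext he
    refine GroupCohAux.mem_Bc_succ.mpr ⟨e, ?_⟩
    funext x
    apply hinj
    show ι (d G A m e x) = ι ((a - a') x)
    calc ι (d G A m e x) = d G B m (fun y => ι (e y)) x := ιc m e x
      _ = d G B m (c - c') x := by rw [hce]
      _ = d G B m c x - d G B m c' x := congrFun (map_sub (d G B m) c c') x
      _ = ι (a x) - ι (a' x) := by rw [hac x, hac' x]
      _ = ι (a x - a' x) := (map_sub ι (a x) (a' x)).symm
      _ = ι ((a - a') x) := rfl
  -- construction of δ₀ on cocycles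
  have hlift : ∀ {X : Type} (q : X → Q), ∃ c : X → B, ∀ x, π (c x) = q x := by
    intro X q
    choose c hc using fun x => hsurj (q x)
    exact ⟨c, hc⟩
  have hconn : ∀ q : Zc G Q m, ∃ (c : (Fin m → G) → B) (a : (Fin (m + 1) → G) → A)
      (ha : a ∈ Zc G A (m + 1)), (∀ x, π (c x) = q.1 x) ∧ (∀ x, ι (a x) = d G B m c x) := by
    intro q
    obtain ⟨c, hc⟩ := hlift q.1
    have hcq : (fun y => π (c y)) = q.1 := funext hc
    have hdc : ∀ x, π (d G B m c x) = 0 := by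
      intro x
      rw [πc m c x, hcq, GroupCohAux.mem_Zc.mp q.2]
      rfl
    choose a hax using fun x => hker (d G B m c x) (hdc x)
    have hq' : (fun x => π (c x)) ∈ Zc G Q m := by rw [hcq]; exact q.2
    exact ⟨c, a, hδcocycle c hq' a hax, hc, hax⟩
  choose δc δa δha δspec₁ δspec₂ using hconn
  let δ₀ : Zc G Q m →+ H G A (m + 1) := AddMonoidHom.mk'
    (fun q => mkH G A (m + 1) (δa q) (δha q))
    (by
      intro q q'
      rw [← GroupCohAux.mkH_add]
      refine hδuniq (δc (q + q')) (δc q + δc q') ?_ (δa (q + q')) (δa q + δa q')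
        (δha (q + q')) (add_mem (δha q) (δha q')) (δspec₂ (q + q')) ?_
      · intro x
        show π (δc (q + q') x) = π (δc q x + δc q' x)
        rw [δspec₁ (q + q') x, map_add, δspec₁ q x, δspec₁ q' x]
        rfl
      · intro x
        show ι (δa q x + δa q' x) = d G B m (δc q + δc q') x
        have hsum : d G B m (δc q + δc q') x = d G B m (δc q) x + d G B m (δc q') x :=
          congrFun (map_add (d G B m) (δc q) (δc q')) x
        rw [map_add, δspec₂ q x, δspec₂ q' x, hsum])
  have hδ₀ : ∀ q ∈ (Bc G Q m).addSubgroupOf (Zc G Q m), δ₀ q = 0 := by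
    intro q hq
    have hq' : q.1 ∈ Bc G Q m := AddSubgroup.mem_addSubgroupOf.mp hq
    show mkH G A (m + 1) (δa q) (δha q) = 0
    have hex : ∃ c : (Fin m → G) → B, (∀ x, π (c x) = q.1 x) ∧ d G B m c = 0 := by
      cases m with
      | zero =>
        have hq0 : q.1 = 0 := by simpa [Bc] using hq'
        exact ⟨0, by intro x; rw [hq0]; simp, map_zero _⟩
      | succ n =>
        obtain ⟨r, hr⟩ := GroupCohAux.mem_Bc_succ.mp hq'
        obtain ⟨s, hs⟩ := hlift r
        have hsr : (fun y => π (s y)) = r := funext hs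
        refine ⟨d G B n s, ?_, GroupCohAux.d_d n s⟩
        intro x
        rw [πc n s x, hsr, hr]
    obtain ⟨c, hcq, hdc⟩ := hex
    rw [← GroupCohAux.mkH_zero (G := G) (M := A) (m + 1)]
    refine hδuniq (δc q) c (fun x => by rw [δspec₁ q x, hcq x]) (δa q) 0
      (δha q) (zero_mem _) (δspec₂ q) ?_
    intro x
    rw [hdc]
    simp
  let δ : H G Q m →+ H G A (m + 1) := QuotientAddGroup.lift _ δ₀ hδ₀
  have hδmk : ∀ (c : (Fin m → G) → B) (a : (Fin (m + 1) → G) → A)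
      (ha : a ∈ Zc G A (m + 1)) (hq : (fun x => π (c x)) ∈ Zc G Q m),
      (∀ x, ι (a x) = d G B m c x) →
      δ (mkH G Q m (fun x => π (c x)) hq) = mkH G A (m + 1) a ha := by
    intro c a ha hq hac
    show mkH G A (m + 1) (δa ⟨_, hq⟩) (δha ⟨_, hq⟩) = mkH G A (m + 1) a ha
    exact hδuniq (δc ⟨_, hq⟩) c (fun x => by rw [δspec₁ ⟨_, hq⟩ x]) _ _ _ _
      (δspec₂ ⟨_, hq⟩) hac
  refine ⟨F, δ, hFmk, hδmk, ?_, ?_⟩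
  · -- exactness
    intro y
    induction y using QuotientAddGroup.induction_on with
    | H q =>
      constructor
      · -- δ [q] = 0 → ∃ x, F x = [q]
        intro h0
        have h0' : mkH G A (m + 1) (δa q) (δha q) = 0 := h0
        have hb : δa q ∈ Bc G A (m + 1) := (GroupCohAux.mkH_eq_zero_iff _).mp h0'
        obtain ⟨e, he⟩ := GroupCohAux.mem_Bc_succ.mp hb
        have hιe : (fun y => ι (e y)) = fun y => ι (e y) := rfl
        have hz : (δc q - fun x => ι (e x)) ∈ Zc G B m := by
          rw [GroupCohAux.mem_Zc]
          funext x
          have h1 : d G B m (δc q - fun y => ι (e y)) x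
              = d G B m (δc q) x - d G B m (fun y => ι (e y)) x :=
            congrFun (map_sub (d G B m) (δc q) (fun y => ι (e y))) x
          rw [h1, ← ιc m e x, he, ← δspec₂ q x]
          show ι (δa q x) - ι (δa q x) = (0 : (Fin (m + 1) → G) → B) x
          rw [sub_self]
          rfl
        refine ⟨mkH G B m _ hz, ?_⟩
        rw [hFmk _ hz (hZB _ hz)]
        show mkH G Q m _ _ = QuotientAddGroup.mk q
        have hqq : QuotientAddGroup.mk q = mkH G Q m q.1 q.2 := rfl
        rw [hqq]
        refine GroupCohAux.mkH_congr _ _ ?_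
        funext x
        show π (δc q x - ι (e x)) = q.1 x
        rw [map_sub, hπι, sub_zero, δspec₁ q x]
      · -- δ ∘ F = 0
        rintro ⟨x, hx⟩
        rw [← hx]
        induction x using QuotientAddGroup.induction_on with
        | H c =>
          have hq' : (fun x => π (c.1 x)) ∈ Zc G Q m := hZB c.1 c.2
          have h1 : F (QuotientAddGroup.mk c) = mkH G Q m (fun x => π (c.1 x)) hq' :=
            hFmk c.1 c.2 hq'
          rw [h1, hδmk c.1 0 (zero_mem _) hq'
            (fun x => by show ι 0 = d G B m c.1 x; rw [map_zero, GroupCohAux.mem_Zc.mp c.2]; rfl)]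
          exact GroupCohAux.mkH_zero (m + 1)
  · -- surjectivity of δ
    intro y
    induction y using QuotientAddGroup.induction_on with
    | H a =>
      obtain ⟨c, hc⟩ := GroupCohAux.mem_Bc_succ.mp (key1 a.1 a.2)
      have hq : (fun x => π (c x)) ∈ Zc G Q m := by
        rw [GroupCohAux.mem_Zc]
        funext x
        rw [← πc m c x, show d G B m c x = ι (a.1 x) from congrFun hc x, hπι]
        rfl
      exact ⟨mkH G Q m _ hq, hδmk c a.1 a.2 hq (fun x => (congrFun hc x).symm)⟩
end

section
/- Let G be a finite group and B a ℤ_pG-module, free of finite rank over ℤ_p, and let e := exp H^m(G,B). Then the map H^m(G, e·B) → H^m(G, B) induced by the inclusion e·B ↪ B is the zero map. -/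
open GroupCoh

/-- Let `G` be a finite group, `B` a `ℤ_p G`-module free of finite rank over `ℤ_p`, and
`e := exp H^m(G, B)`. Then the map `H^m(G, e·B) → H^m(G, B)` induced by the inclusion
`e·B ↪ B` is the zero map; equivalently, every `m`-cocycle of `G` with values in the
submodule `e·B` is an `m`-coboundary of `G` with values in `B`. -/
theorem map_from_smul_submodule_cohomology_eq_zero (p : ℕ) [Fact p.Prime]
    (G : Type) [Group G] [Fintype G]
    (B : Type) [AddCommGroup B] [Module (PadicInt p) B] [DistribMulAction G B]
    [SMulCommClass G (PadicInt p) B]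
    [Module.Free (PadicInt p) B] [Module.Finite (PadicInt p) B]
    (m : ℕ) (e : ℕ) (he : e = AddMonoid.exponent (H G B m))
    (c : (Fin m → G) → B) (hc : c ∈ Zc G B m)
    (hval : ∀ x : Fin m → G, ∃ b : B, c x = e • b) :
    c ∈ Bc G B m := by
  rcases Nat.eq_zero_or_pos e with he0 | hepos
  · have hc0 : c = 0 := by
      funext x
      obtain ⟨b, hb⟩ := hval x
      simp [hb, he0]
    rw [hc0]; exact (Bc G B m).zero_mem
  · choose b hb using hval
    have hinj : Function.Injective (fun x : B => e • x) := by
      intro x y h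
      have h' : ((e : PadicInt p)) • x = ((e : PadicInt p)) • y := by
        simpa [Nat.cast_smul_eq_nsmul] using h
      exact smul_right_injective B (by exact_mod_cast hepos.ne') h'
    have hceq : c = e • b := by funext x; exact hb x
    have hbZ : b ∈ Zc G B m := by
      have hdc : d G B m c = 0 := hc
      have : e • d G B m b = 0 := by
        rw [← AddMonoidHom.map_nsmul, ← hceq, hdc]
      funext g
      have := congrFun this g
      simpa using hinj (by simpa using this)
    have hz : e • mkH G B m b hbZ = 0 := by
      rw [he]
      exact AddMonoid.exponent_nsmul_eq_zero _
    have : mkH G B m c hc = 0 := by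
      have : (⟨c, hc⟩ : Zc G B m) = e • (⟨b, hbZ⟩ : Zc G B m) := by
        exact Subtype.ext (by simpa using hceq)
      rw [mkH, this]
      rw [QuotientAddGroup.mk_nsmul]
      exact hz
    have := (QuotientAddGroup.eq_zero_iff _).mp this
    exact this
end
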